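/- Contractivity of the decreasing rearrangement in L^p: for u, v ∈ L^p(Ω) with 1 ≤ p < ∞, ‖u_* − v_*‖_{L^p(0,|Ω|)} ≤ ‖u − v‖_{L^p(Ω)}. -/

import Mathlib

open MeasureTheory Set
open scoped ENNReal NNReal

/-- The distribution function `m_u(q) = |{x ∈ Ω : u(x) > q}|`. -/
noncomputable def distFun {d : ℕ} (Ω : Set (Fin d → ℝ)) (u : (Fin d → ℝ) → ℝ) (q : ℝ) : ℝ :=
  (volume {x ∈ Ω | q < u x}).toReal

/-- The decreasing rearrangement `u_*(s) = inf {q : m_u(q) ≤ s}`. -/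
noncomputable def decRear {d : ℕ} (Ω : Set (Fin d → ℝ)) (u : (Fin d → ℝ) → ℝ) (s : ℝ) : ℝ :=
  sInf {q : ℝ | distFun Ω u q ≤ s}

section Aux

variable {d : ℕ}

/-- EReal-valued version of the decreasing rearrangement, globally antitone. -/
noncomputable def AR (Ω : Set (Fin d → ℝ)) (u : (Fin d → ℝ) → ℝ) (s : ℝ) : EReal :=
  sInf (Real.toEReal '' {q : ℝ | distFun Ω u q ≤ s})

/-- Globally measurable version of the decreasing rearrangement. -/
noncomputable def dR (Ω : Set (Fin d → ℝ)) (u : (Fin d → ℝ) → ℝ) (s : ℝ) : ℝ :=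
  (AR Ω u s).toReal

lemma AR_antitone (Ω : Set (Fin d → ℝ)) (u : (Fin d → ℝ) → ℝ) : Antitone (AR Ω u) :=
  fun _s _s' h => sInf_le_sInf (image_mono fun _q hq => le_trans hq h)

lemma dR_measurable (Ω : Set (Fin d → ℝ)) (u : (Fin d → ℝ) → ℝ) : Measurable (dR Ω u) :=
  measurable_ereal_toReal.comp (AR_antitone Ω u).measurable

variable (Ω : Set (Fin d → ℝ)) (u v : (Fin d → ℝ) → ℝ)

lemma measurableSet_sep (hΩm : MeasurableSet Ω) (hum : Measurable u) (t : ℝ) :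
    MeasurableSet {x ∈ Ω | t < u x} :=
  hΩm.inter (measurableSet_lt measurable_const hum)

lemma vol_sep_ne_top (hfin : volume Ω ≠ ⊤) (t : ℝ) : volume {x ∈ Ω | t < u x} ≠ ⊤ :=
  (lt_of_le_of_lt (measure_mono (sep_subset _ _)) hfin.lt_top).ne

lemma distFun_antitone (hfin : volume Ω ≠ ⊤) : Antitone (distFun Ω u) := by
  intro t t' h
  refine ENNReal.toReal_mono (vol_sep_ne_top Ω u hfin t) (measure_mono ?_)
  rintro x ⟨hx, hlt⟩
  exact ⟨hx, lt_of_le_of_lt h hlt⟩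

lemma distFun_rc (hfin : volume Ω ≠ ⊤) {s t : ℝ} (hs0 : 0 ≤ s) (h : s < distFun Ω u t) :
    ∃ t', t < t' ∧ s < distFun Ω u t' := by
  set A : ℕ → Set (Fin d → ℝ) := fun n => {x ∈ Ω | t + 1/(n+1) < u x} with hA
  have hmono : Monotone A := by
    intro n m hnm x hx
    refine ⟨hx.1, lt_of_le_of_lt ?_ hx.2⟩
    have h1 : (1:ℝ)/(m+1) ≤ 1/(n+1) := by
      apply one_div_le_one_div_of_le (by positivity)
      have : (n:ℝ) ≤ m := by exact_mod_cast hnm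
      linarith
    linarith
  have hunion : ⋃ n, A n = {x ∈ Ω | t < u x} := by
    ext x
    simp only [hA, mem_iUnion, mem_sep_iff]
    constructor
    · rintro ⟨n, hx, hlt⟩
      refine ⟨hx, lt_of_le_of_lt ?_ hlt⟩
      have : (0:ℝ) < 1/((n:ℝ)+1) := by positivity
      linarith
    · rintro ⟨hx, hlt⟩
      obtain ⟨n, hn⟩ := exists_nat_one_div_lt (show 0 < u x - t by linarith)
      exact ⟨n, hx, by linarith⟩
  have htend := tendsto_measure_iUnion_atTop (μ := volume) hmono
  rw [hunion] at htend
  have hofr : ENNReal.ofReal s < volume {x ∈ Ω | t < u x} :=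
    (ENNReal.ofReal_lt_iff_lt_toReal hs0 (vol_sep_ne_top Ω u hfin t)).2 h
  obtain ⟨n, hn⟩ := (htend.eventually_const_lt hofr).exists
  refine ⟨t + 1/(n+1), lt_add_of_pos_right t (by positivity), ?_⟩
  exact (ENNReal.ofReal_lt_iff_lt_toReal hs0 (vol_sep_ne_top Ω u hfin _)).1 hn

lemma S_nonempty (hΩm : MeasurableSet Ω) (hum : Measurable u) (hfin : volume Ω ≠ ⊤)
    {s : ℝ} (hs : 0 < s) : {q : ℝ | distFun Ω u q ≤ s}.Nonempty := by
  set A : ℕ → Set (Fin d → ℝ) := fun n => {x ∈ Ω | (n:ℝ) < u x} with hA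
  have hanti : Antitone A := by
    intro n m hnm x hx
    exact ⟨hx.1, lt_of_le_of_lt (by exact_mod_cast hnm) hx.2⟩
  have hInter : ⋂ n, A n = ∅ := by
    ext x
    simp only [hA, mem_iInter, mem_sep_iff, mem_empty_iff_false, iff_false, not_forall]
    by_cases hx : x ∈ Ω
    · obtain ⟨n, hn⟩ := exists_nat_gt (u x)
      exact ⟨n, fun h => absurd h.2 (not_lt.2 hn.le)⟩
    · exact ⟨0, fun h => hx h.1⟩
  have htend := tendsto_measure_iInter_atTop (μ := volume)
    (fun n => (measurableSet_sep Ω u hΩm hum _).nullMeasurableSet) hanti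
    ⟨0, vol_sep_ne_top Ω u hfin _⟩
  rw [hInter, measure_empty] at htend
  obtain ⟨n, hn⟩ := (htend.eventually_lt_const (show (0:ℝ≥0∞) < ENNReal.ofReal s from
    ENNReal.ofReal_pos.2 hs)).exists
  exact ⟨n, ENNReal.toReal_le_of_le_ofReal hs.le hn.le⟩

lemma S_bddBelow (hfin : volume Ω ≠ ⊤) {s : ℝ} (hs0 : 0 ≤ s) (hs : s < (volume Ω).toReal) :
    BddBelow {q : ℝ | distFun Ω u q ≤ s} := by
  set A : ℕ → Set (Fin d → ℝ) := fun n => {x ∈ Ω | -(n:ℝ) < u x} with hA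
  have hmono : Monotone A := by
    intro n m hnm x hx
    refine ⟨hx.1, lt_of_le_of_lt (neg_le_neg (by exact_mod_cast hnm)) hx.2⟩
  have hunion : ⋃ n, A n = Ω := by
    ext x
    simp only [hA, mem_iUnion, mem_sep_iff]
    constructor
    · rintro ⟨n, hx, _⟩; exact hx
    · intro hx
      obtain ⟨n, hn⟩ := exists_nat_gt (-(u x))
      exact ⟨n, hx, by linarith⟩
  have htend := tendsto_measure_iUnion_atTop (μ := volume) hmono
  rw [hunion] at htend
  have hofr : ENNReal.ofReal s < volume Ω := (ENNReal.ofReal_lt_iff_lt_toReal hs0 hfin).2 hs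
  obtain ⟨n, hn⟩ := (htend.eventually_const_lt hofr).exists
  refine ⟨-(n:ℝ), fun q hq => ?_⟩
  by_contra hq'
  push_neg at hq'
  have h1 : distFun Ω u (-(n:ℝ)) ≤ distFun Ω u q := distFun_antitone Ω u hfin hq'.le
  have h2 : s < distFun Ω u (-(n:ℝ)) :=
    (ENNReal.ofReal_lt_iff_lt_toReal hs0 (vol_sep_ne_top Ω u hfin _)).1 hn
  exact absurd hq (not_le.2 (lt_of_lt_of_le h2 h1))

lemma AR_coe (hΩm : MeasurableSet Ω) (hum : Measurable u) (hfin : volume Ω ≠ ⊤)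
    {s : ℝ} (hs : s ∈ Ioo 0 (volume Ω).toReal) :
    AR Ω u s = ((sInf {q : ℝ | distFun Ω u q ≤ s} : ℝ) : EReal) := by
  set S := {q : ℝ | distFun Ω u q ≤ s} with hS
  have hne : S.Nonempty := S_nonempty Ω u hΩm hum hfin hs.1
  have hbdd : BddBelow S := S_bddBelow Ω u hfin hs.1.le hs.2
  have hge : ((sInf S : ℝ) : EReal) ≤ AR Ω u s := by
    refine le_sInf ?_
    rintro b ⟨q, hq, rfl⟩
    exact_mod_cast csInf_le hbdd hq
  refine le_antisymm ?_ hge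
  obtain ⟨q0, hq0⟩ := hne
  have htop : AR Ω u s ≠ ⊤ :=
    ne_top_of_le_ne_top (EReal.coe_ne_top q0) (sInf_le (mem_image_of_mem _ hq0))
  have hbot : AR Ω u s ≠ ⊥ := ((EReal.bot_lt_coe _).trans_le hge).ne'
  rw [← EReal.coe_toReal htop hbot]
  have hlb : ∀ q ∈ S, (AR Ω u s).toReal ≤ q := by
    intro q hq
    have h1 : AR Ω u s ≤ (q : EReal) := sInf_le (mem_image_of_mem _ hq)
    rw [← EReal.coe_toReal htop hbot] at h1
    exact_mod_cast h1
  exact_mod_cast le_csInf ⟨q0, hq0⟩ hlb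

lemma dR_eq_decRear (hΩm : MeasurableSet Ω) (hum : Measurable u) (hfin : volume Ω ≠ ⊤)
    {s : ℝ} (hs : s ∈ Ioo 0 (volume Ω).toReal) : dR Ω u s = decRear Ω u s := by
  rw [dR, AR_coe Ω u hΩm hum hfin hs, decRear, EReal.toReal_coe]

lemma lt_dR_iff (hΩm : MeasurableSet Ω) (hum : Measurable u) (hfin : volume Ω ≠ ⊤)
    {s : ℝ} (hs : s ∈ Ioo 0 (volume Ω).toReal) {t : ℝ} :
    t < dR Ω u s ↔ s < distFun Ω u t := by
  have hne := S_nonempty Ω u hΩm hum hfin hs.1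
  have hbdd := S_bddBelow Ω u hfin hs.1.le hs.2
  rw [dR_eq_decRear Ω u hΩm hum hfin hs, decRear]
  constructor
  · intro h
    by_contra hc
    push_neg at hc
    exact absurd (csInf_le hbdd hc) (not_le.2 h)
  · intro h
    obtain ⟨t', ht', hst'⟩ := distFun_rc Ω u hfin hs.1.le h
    refine lt_of_lt_of_le ht' (le_csInf hne fun q hq => ?_)
    by_contra hq'
    push_neg at hq'
    exact absurd hq (not_le.2 (lt_of_lt_of_le hst' (distFun_antitone Ω u hfin hq'.le)))

lemma dR_le_iff (hΩm : MeasurableSet Ω) (hum : Measurable u) (hfin : volume Ω ≠ ⊤)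
    {s : ℝ} (hs : s ∈ Ioo 0 (volume Ω).toReal) {t : ℝ} :
    dR Ω u s ≤ t ↔ distFun Ω u t ≤ s := by
  have h := lt_dR_iff Ω u hΩm hum hfin hs (t := t)
  constructor
  · intro h1
    by_contra hc
    push_neg at hc
    exact absurd (h.2 hc) (not_lt.2 h1)
  · intro h1
    by_contra hc
    push_neg at hc
    exact absurd (h.1 hc) (not_lt.2 h1)

lemma keyK (hΩm : MeasurableSet Ω) (hfin : volume Ω ≠ ⊤)
    (hum : Measurable u) (hvm : Measurable v) (τ : ℝ) :
    ∫⁻ s in Ioo 0 (volume Ω).toReal, ENNReal.ofReal (dR Ω u s - dR Ω v s - τ) ≤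
      ∫⁻ x in Ω, ENNReal.ofReal (u x - v x - τ) := by
  set M := (volume Ω).toReal with hM
  set A : Set (ℝ × ℝ) := {p | dR Ω v p.1 + τ ≤ p.2 ∧ p.2 < dR Ω u p.1} with hA
  have hAm : MeasurableSet A :=
    (measurableSet_le (((dR_measurable Ω v).comp measurable_fst).add_const τ) measurable_snd).inter
      (measurableSet_lt measurable_snd ((dR_measurable Ω u).comp measurable_fst))
  have hGm : Measurable (A.indicator (1 : ℝ × ℝ → ℝ≥0∞)) := measurable_const.indicator hAm
  set B : Set (ℝ × (Fin d → ℝ)) := {p | v p.2 + τ ≤ p.1 ∧ p.1 < u p.2} with hB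
  have hBm : MeasurableSet B :=
    (measurableSet_le ((hvm.comp measurable_snd).add_const τ) measurable_fst).inter
      (measurableSet_lt measurable_fst (hum.comp measurable_snd))
  have hslice2 : ∀ t : ℝ, MeasurableSet {x | v x + τ ≤ t ∧ t < u x} :=
    fun t => (measurableSet_le (hvm.add_const τ) measurable_const).inter
      (measurableSet_lt measurable_const hum)
  calc ∫⁻ s in Ioo 0 M, ENNReal.ofReal (dR Ω u s - dR Ω v s - τ)
      = ∫⁻ s in Ioo 0 M, ∫⁻ t, A.indicator (1 : ℝ × ℝ → ℝ≥0∞) (s, t) := by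
        refine lintegral_congr fun s => ?_
        have h1 : (fun t => A.indicator (1 : ℝ × ℝ → ℝ≥0∞) (s, t))
            = (Ico (dR Ω v s + τ) (dR Ω u s)).indicator (1 : ℝ → ℝ≥0∞) := by
          ext t
          simp only [indicator_apply, hA, mem_setOf_eq, mem_Ico, Pi.one_apply]
        rw [h1, lintegral_indicator_one measurableSet_Ico, Real.volume_Ico]
        congr 1
        ring
    _ = ∫⁻ t, ∫⁻ s in Ioo 0 M, A.indicator (1 : ℝ × ℝ → ℝ≥0∞) (s, t) :=
        lintegral_lintegral_swap (by exact hGm.aemeasurable)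
    _ ≤ ∫⁻ t, (volume.restrict Ω) {x | v x + τ ≤ t ∧ t < u x} := by
        refine lintegral_mono fun t => ?_
        have hsl : MeasurableSet {s : ℝ | (s, t) ∈ A} :=
          (measurable_id.prodMk measurable_const) hAm
        have h2 : (fun s => A.indicator (1 : ℝ × ℝ → ℝ≥0∞) (s, t))
            = ({s : ℝ | (s, t) ∈ A}).indicator (1 : ℝ → ℝ≥0∞) := by
          ext s
          simp only [indicator_apply, mem_setOf_eq, Pi.one_apply]
        rw [h2, lintegral_indicator_one hsl, Measure.restrict_apply hsl,
          Measure.restrict_apply (hslice2 t)]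
        have hsub : {s : ℝ | (s, t) ∈ A} ∩ Ioo 0 M ⊆
            Ico (distFun Ω v (t - τ)) (distFun Ω u t) := by
          rintro s ⟨⟨h1, h2⟩, hsI⟩
          constructor
          · exact (dR_le_iff Ω v hΩm hvm hfin hsI).1 (by linarith)
          · exact (lt_dR_iff Ω u hΩm hum hfin hsI).1 h2
        refine le_trans (measure_mono hsub) ?_
        rw [Real.volume_Ico]
        have hfinB : volume ({x | v x + τ ≤ t ∧ t < u x} ∩ Ω) ≠ ⊤ :=
          (lt_of_le_of_lt (measure_mono inter_subset_right) hfin.lt_top).ne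
        have hkey : distFun Ω u t ≤ distFun Ω v (t - τ)
            + (volume ({x | v x + τ ≤ t ∧ t < u x} ∩ Ω)).toReal := by
          have hincl : {x ∈ Ω | t < u x} ⊆
              {x ∈ Ω | t - τ < v x} ∪ ({x | v x + τ ≤ t ∧ t < u x} ∩ Ω) := by
            rintro x ⟨hx, hux⟩
            rcases lt_or_ge (t - τ) (v x) with h | h
            · exact Or.inl ⟨hx, h⟩
            · exact Or.inr ⟨⟨by linarith, hux⟩, hx⟩
          have h3 : volume {x ∈ Ω | t < u x} ≤ volume {x ∈ Ω | t - τ < v x}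
              + volume ({x | v x + τ ≤ t ∧ t < u x} ∩ Ω) :=
            le_trans (measure_mono hincl) (measure_union_le _ _)
          simp only [distFun]
          calc (volume {x ∈ Ω | t < u x}).toReal
              ≤ (volume {x ∈ Ω | t - τ < v x}
                + volume ({x | v x + τ ≤ t ∧ t < u x} ∩ Ω)).toReal := by
                refine ENNReal.toReal_mono ?_ h3
                exact ENNReal.add_ne_top.2 ⟨vol_sep_ne_top Ω v hfin _, hfinB⟩
            _ = _ := ENNReal.toReal_add (vol_sep_ne_top Ω v hfin _) hfinB
        calc ENNReal.ofReal (distFun Ω u t - distFun Ω v (t - τ))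
            ≤ ENNReal.ofReal ((volume ({x | v x + τ ≤ t ∧ t < u x} ∩ Ω)).toReal) :=
              ENNReal.ofReal_le_ofReal (by linarith)
          _ = volume ({x | v x + τ ≤ t ∧ t < u x} ∩ Ω) := ENNReal.ofReal_toReal hfinB
    _ = ∫⁻ x in Ω, ENNReal.ofReal (u x - v x - τ) := by
        have h1 : ∀ t : ℝ, (volume.restrict Ω) {x | v x + τ ≤ t ∧ t < u x}
            = ∫⁻ x in Ω, B.indicator (1 : ℝ × (Fin d → ℝ) → ℝ≥0∞) (t, x) := by
          intro t
          have h2 : (fun x => B.indicator (1 : ℝ × (Fin d → ℝ) → ℝ≥0∞) (t, x))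
              = ({x | v x + τ ≤ t ∧ t < u x}).indicator (1 : (Fin d → ℝ) → ℝ≥0∞) := by
            ext x
            simp only [indicator_apply, hB, mem_setOf_eq, Pi.one_apply]
          rw [h2, lintegral_indicator_one (hslice2 t)]
        rw [lintegral_congr h1,
          lintegral_lintegral_swap (by exact (measurable_const.indicator hBm).aemeasurable)]
        refine lintegral_congr fun x => ?_
        have h3 : (fun t => B.indicator (1 : ℝ × (Fin d → ℝ) → ℝ≥0∞) (t, x))
            = (Ico (v x + τ) (u x)).indicator (1 : ℝ → ℝ≥0∞) := by
          ext t
          simp only [indicator_apply, hB, mem_setOf_eq, mem_Ico, Pi.one_apply]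
        rw [h3, lintegral_indicator_one measurableSet_Ico, Real.volume_Ico]
        congr 1
        ring


end Aux

section Repr

lemma measurable_rpow_const (q : ℝ) : Measurable fun x : ℝ => x ^ q := by
  have hrw : (fun x : ℝ => x ^ q) = fun x =>
      if x < 0 then Real.exp (Real.log x * q) * Real.cos (q * Real.pi)
      else if x = 0 then (if q = 0 then 1 else 0) else Real.exp (Real.log x * q) := by
    funext x
    rcases lt_trichotomy x 0 with h | h | h
    · rw [if_pos h, Real.rpow_def_of_neg h]
    · subst h
      rw [if_neg (lt_irrefl _), if_pos rfl]
      rcases eq_or_ne q 0 with rfl | hq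
      · rw [if_pos rfl, Real.rpow_zero]
      · rw [if_neg hq, Real.zero_rpow hq]
    · rw [if_neg (not_lt.2 h.le), if_neg h.ne', Real.rpow_def_of_pos h]
  rw [hrw]
  refine Measurable.ite measurableSet_Iio
    ((Real.measurable_exp.comp (Real.measurable_log.mul measurable_const)).mul measurable_const)
    (Measurable.ite measurableSet_eq measurable_const
      (Real.measurable_exp.comp (Real.measurable_log.mul measurable_const)))

lemma ofReal_max_zero (x : ℝ) : ENNReal.ofReal (max x 0) = ENNReal.ofReal x := by
  rcases le_total 0 x with h | h
  · rw [max_eq_left h]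
  · rw [max_eq_right h, ENNReal.ofReal_of_nonpos h, ENNReal.ofReal_zero]

lemma coe_nnnorm_split (a : ℝ) : (‖a‖₊ : ℝ≥0∞) = ENNReal.ofReal a + ENNReal.ofReal (-a) := by
  rcases le_total 0 a with h | h
  · have h0 : ENNReal.ofReal (-a) = 0 := ENNReal.ofReal_of_nonpos (by linarith)
    rw [h0, add_zero, show (‖a‖₊ : ℝ≥0∞) = ENNReal.ofReal ‖a‖ from (ofReal_norm a).symm, Real.norm_of_nonneg h]
  · have h0 : ENNReal.ofReal a = 0 := ENNReal.ofReal_of_nonpos h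
    rw [h0, zero_add, show (‖a‖₊ : ℝ≥0∞) = ENNReal.ofReal ‖a‖ from (ofReal_norm a).symm, Real.norm_of_nonpos h]

lemma repr_nonneg {r : ℝ} (hr : 1 < r) {a : ℝ} (ha : 0 ≤ a) :
    ∫⁻ τ in Ioi (0:ℝ), ENNReal.ofReal (r * (r-1) * τ ^ (r-2)) * ENNReal.ofReal (a - τ)
      = ENNReal.ofReal (a ^ r) := by
  have hr0 : (0:ℝ) < r := by linarith
  rcases ha.eq_or_lt with rfl | ha'
  · rw [Real.zero_rpow hr0.ne', ENNReal.ofReal_zero]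
    refine (setLIntegral_congr_fun measurableSet_Ioi
      (fun τ hτ => ?_)).trans lintegral_zero
    rw [ENNReal.ofReal_of_nonpos (show (0:ℝ) - τ ≤ 0 by linarith [mem_Ioi.1 hτ]), mul_zero]
  · set c := r * (r-1) with hc
    have hc0 : (0:ℝ) ≤ c := by nlinarith
    set g : ℝ → ℝ := fun τ => c * τ ^ (r-2) * max (a - τ) 0 with hg
    have step1 : ∫⁻ τ in Ioi (0:ℝ), ENNReal.ofReal (c * τ ^ (r-2)) * ENNReal.ofReal (a - τ)
        = ∫⁻ τ in Ioi (0:ℝ), ENNReal.ofReal (g τ) := by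
      refine setLIntegral_congr_fun measurableSet_Ioi
        (fun τ hτ => ?_)
      rw [hg]
      dsimp only
      rw [← ofReal_max_zero (a - τ),
        ← ENNReal.ofReal_mul (mul_nonneg hc0 (Real.rpow_nonneg (le_of_lt hτ) _))]
    have hii : IntervalIntegrable (fun τ => c * τ ^ (r-2) * (a - τ)) volume 0 a := by
      apply IntervalIntegrable.mul_continuousOn
      · exact (intervalIntegral.intervalIntegrable_rpow' (by linarith)).const_mul c
      · exact (continuous_const.sub continuous_id).continuousOn
    have hIoc : IntegrableOn g (Ioc 0 a) volume := by
      have h1 := (intervalIntegrable_iff_integrableOn_Ioc_of_le ha'.le).1 hii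
      refine IntegrableOn.congr_fun h1 (fun τ hτ => ?_) measurableSet_Ioc
      rw [hg]
      dsimp only
      rw [max_eq_left (by linarith [hτ.2] : (0:ℝ) ≤ a - τ)]
    have hIoi : IntegrableOn g (Ioi a) volume := by
      refine (integrableOn_zero : IntegrableOn (fun _ : ℝ => (0:ℝ)) (Ioi a) volume).congr_fun
        (fun τ hτ => ?_) measurableSet_Ioi
      rw [hg]
      dsimp only
      rw [max_eq_right (by linarith [mem_Ioi.1 hτ] : a - τ ≤ 0), mul_zero]
    have hint : IntegrableOn g (Ioi 0) volume := by
      rw [← Ioc_union_Ioi_eq_Ioi ha'.le]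
      exact hIoc.union hIoi
    have hgnn : 0 ≤ᵐ[volume.restrict (Ioi (0:ℝ))] g := by
      filter_upwards [self_mem_ae_restrict (measurableSet_Ioi : MeasurableSet (Ioi (0:ℝ)))]
        with τ hτ
      exact mul_nonneg (mul_nonneg hc0 (Real.rpow_nonneg (le_of_lt hτ) _)) (le_max_right _ _)
    rw [step1, ← ofReal_integral_eq_lintegral_ofReal hint hgnn]
    congr 1
    rw [← Ioc_union_Ioi_eq_Ioi ha'.le,
      setIntegral_union (Ioc_disjoint_Ioi le_rfl) measurableSet_Ioi hIoc hIoi]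
    have hz : ∫ τ in Ioi a, g τ = 0 := by
      rw [setIntegral_congr_fun measurableSet_Ioi (fun τ hτ => ?_), integral_zero]
      rw [hg]
      dsimp only
      rw [max_eq_right (by linarith [mem_Ioi.1 hτ] : a - τ ≤ 0), mul_zero]
    rw [hz, add_zero]
    have hIocEq : ∫ τ in Ioc 0 a, g τ
        = ∫ τ in Ioc 0 a, ((c * a) * τ ^ (r-2) - c * τ ^ (r-1)) := by
      refine setIntegral_congr_fun measurableSet_Ioc fun τ hτ => ?_
      have hτ0 : τ ≠ 0 := ne_of_gt hτ.1
      have h1 : max (a - τ) 0 = a - τ := max_eq_left (by linarith [hτ.2])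
      have h2 : τ ^ (r-1) = τ ^ (r-2) * τ := by
        rw [show r - 1 = (r-2) + 1 by ring, Real.rpow_add_one hτ0]
      rw [hg]
      dsimp only
      rw [h1, h2]
      ring
    rw [hIocEq, ← intervalIntegral.integral_of_le ha'.le]
    have hint1 : IntervalIntegrable (fun τ => (c*a) * τ ^ (r-2)) volume 0 a :=
      (intervalIntegral.intervalIntegrable_rpow' (by linarith)).const_mul _
    have hint2 : IntervalIntegrable (fun τ => c * τ ^ (r-1)) volume 0 a :=
      (intervalIntegral.intervalIntegrable_rpow' (by linarith)).const_mul _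
    have e1 : r - 2 + 1 = r - 1 := by ring
    have e2 : r - 1 + 1 = r := by ring
    have ha0 : a ≠ 0 := ne_of_gt ha'
    have hr1 : r - 1 ≠ 0 := by intro h; nlinarith
    rw [intervalIntegral.integral_sub hint1 hint2, intervalIntegral.integral_const_mul,
      intervalIntegral.integral_const_mul, integral_rpow (Or.inl (by linarith)),
      integral_rpow (Or.inl (by linarith)), e1, e2,
      Real.zero_rpow hr1, Real.zero_rpow hr0.ne', sub_zero, sub_zero,
      show a ^ (r - 1) = a ^ r / a by rw [Real.rpow_sub ha', Real.rpow_one], hc]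
    field_simp
    ring

lemma repr_pt {r : ℝ} (hr : 1 < r) (a : ℝ) :
    (‖a‖₊ : ℝ≥0∞) ^ r = ∫⁻ τ in Ioi (0:ℝ),
      ENNReal.ofReal (r * (r-1) * τ ^ (r-2)) *
        (ENNReal.ofReal (a - τ) + ENNReal.ofReal (-a - τ)) := by
  have key : ∀ b : ℝ, 0 ≤ b → (‖b‖₊ : ℝ≥0∞) ^ r = ∫⁻ τ in Ioi (0:ℝ),
      ENNReal.ofReal (r * (r-1) * τ ^ (r-2)) *
        (ENNReal.ofReal (b - τ) + ENNReal.ofReal (-b - τ)) := by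
    intro b hb
    have hnn : ((‖b‖₊ : ℝ≥0∞)) = ENNReal.ofReal b := by
      rw [show (‖b‖₊ : ℝ≥0∞) = ENNReal.ofReal ‖b‖ from (ofReal_norm b).symm, Real.norm_of_nonneg hb]
    rw [hnn, ENNReal.ofReal_rpow_of_nonneg hb (by linarith), ← repr_nonneg hr hb]
    refine setLIntegral_congr_fun measurableSet_Ioi
      (fun τ hτ => ?_)
    rw [ENNReal.ofReal_of_nonpos (by linarith [mem_Ioi.1 hτ] : -b - τ ≤ 0), add_zero]
  rcases le_total 0 a with ha | ha
  · exact key a ha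
  · have h2 := key (-a) (by linarith)
    rw [nnnorm_neg] at h2
    rw [h2]
    refine setLIntegral_congr_fun measurableSet_Ioi
      (fun τ _ => ?_)
    rw [neg_neg, add_comm]

lemma repr_int {r : ℝ} (hr : 1 < r) {α : Type*} [MeasurableSpace α]
    (μ : Measure α) [SFinite μ] {f : α → ℝ} (hf : Measurable f) :
    ∫⁻ x, (‖f x‖₊ : ℝ≥0∞) ^ r ∂μ =
      ∫⁻ τ in Ioi (0:ℝ), ENNReal.ofReal (r * (r-1) * τ ^ (r-2)) *
        ((∫⁻ x, ENNReal.ofReal (f x - τ) ∂μ) + ∫⁻ x, ENNReal.ofReal (-f x - τ) ∂μ) := by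
  have hw : Measurable fun τ : ℝ => ENNReal.ofReal (r * (r-1) * τ ^ (r-2)) :=
    ((measurable_rpow_const (r-2)).const_mul _).ennreal_ofReal
  have hm1 : ∀ τ : ℝ, Measurable fun x => ENNReal.ofReal (f x - τ) :=
    fun τ => (hf.sub_const τ).ennreal_ofReal
  have hm2 : ∀ τ : ℝ, Measurable fun x => ENNReal.ofReal (-f x - τ) :=
    fun τ => (hf.neg.sub_const τ).ennreal_ofReal
  have hprod : Measurable (fun p : α × ℝ => ENNReal.ofReal (r * (r-1) * p.2 ^ (r-2)) *
      (ENNReal.ofReal (f p.1 - p.2) + ENNReal.ofReal (-f p.1 - p.2))) := by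
    refine Measurable.mul (f := fun p : α × ℝ => ENNReal.ofReal (r * (r-1) * p.2 ^ (r-2)))
      (g := fun p : α × ℝ => ENNReal.ofReal (f p.1 - p.2) + ENNReal.ofReal (-f p.1 - p.2)) ?_ ?_
    · exact hw.comp measurable_snd
    · exact (((hf.comp measurable_fst).sub measurable_snd).ennreal_ofReal).add
        (((hf.comp measurable_fst).neg.sub measurable_snd).ennreal_ofReal)
  calc ∫⁻ x, (‖f x‖₊ : ℝ≥0∞) ^ r ∂μ
      = ∫⁻ x, (∫⁻ τ in Ioi (0:ℝ), ENNReal.ofReal (r * (r-1) * τ ^ (r-2)) *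
          (ENNReal.ofReal (f x - τ) + ENNReal.ofReal (-f x - τ))) ∂μ :=
        lintegral_congr fun x => repr_pt hr (f x)
    _ = ∫⁻ τ in Ioi (0:ℝ), (∫⁻ x, ENNReal.ofReal (r * (r-1) * τ ^ (r-2)) *
          (ENNReal.ofReal (f x - τ) + ENNReal.ofReal (-f x - τ)) ∂μ) :=
        lintegral_lintegral_swap (by exact hprod.aemeasurable)
    _ = _ := by
        refine lintegral_congr fun τ => ?_
        rw [lintegral_const_mul _ (f := fun x => ENNReal.ofReal (f x - τ) + ENNReal.ofReal (-f x - τ))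
            ((hm1 τ).add (hm2 τ)),
          lintegral_add_left (hm1 τ) _]

lemma main_glue {α β : Type*} [MeasurableSpace α] [MeasurableSpace β] {r : ℝ} (hr : 1 ≤ r)
    (μ : Measure α) (ν : Measure β) [SFinite μ] [SFinite ν]
    {f : α → ℝ} {g : β → ℝ} (hf : Measurable f) (hg : Measurable g)
    (h1 : ∀ τ : ℝ, 0 ≤ τ →
      (∫⁻ x, ENNReal.ofReal (f x - τ) ∂μ) ≤ ∫⁻ y, ENNReal.ofReal (g y - τ) ∂ν)
    (h2 : ∀ τ : ℝ, 0 ≤ τ →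
      (∫⁻ x, ENNReal.ofReal (-f x - τ) ∂μ) ≤ ∫⁻ y, ENNReal.ofReal (-g y - τ) ∂ν) :
    ∫⁻ x, (‖f x‖₊ : ℝ≥0∞) ^ r ∂μ ≤ ∫⁻ y, (‖g y‖₊ : ℝ≥0∞) ^ r ∂ν := by
  rcases eq_or_lt_of_le hr with heq | hr'
  · subst heq
    simp only [ENNReal.rpow_one]
    have e1 : ∫⁻ x, (‖f x‖₊ : ℝ≥0∞) ∂μ
        = (∫⁻ x, ENNReal.ofReal (f x) ∂μ) + ∫⁻ x, ENNReal.ofReal (-f x) ∂μ := by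
      rw [← lintegral_add_left (hf.ennreal_ofReal) _]
      exact lintegral_congr fun x => coe_nnnorm_split (f x)
    have e2 : ∫⁻ y, (‖g y‖₊ : ℝ≥0∞) ∂ν
        = (∫⁻ y, ENNReal.ofReal (g y) ∂ν) + ∫⁻ y, ENNReal.ofReal (-g y) ∂ν := by
      rw [← lintegral_add_left (hg.ennreal_ofReal) _]
      exact lintegral_congr fun y => coe_nnnorm_split (g y)
    rw [e1, e2]
    have k1 := h1 0 le_rfl
    have k2 := h2 0 le_rfl
    simp only [sub_zero] at k1 k2
    exact add_le_add k1 k2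
  · rw [repr_int hr' μ hf, repr_int hr' ν hg]
    refine lintegral_mono_ae ?_
    filter_upwards [self_mem_ae_restrict (measurableSet_Ioi : MeasurableSet (Ioi (0:ℝ)))]
      with τ hτ
    exact mul_le_mul_right (add_le_add (h1 τ (le_of_lt hτ)) (h2 τ (le_of_lt hτ))) _

end Repr


/-- Contractivity of the decreasing rearrangement in `L^p`, `1 ≤ p < ∞`:
`‖u_* − v_*‖_{L^p(0,|Ω|)} ≤ ‖u − v‖_{L^p(Ω)}`. -/
theorem decRear_contractive_Lp {d : ℕ} (Ω : Set (Fin d → ℝ)) (hΩo : IsOpen Ω)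
    (hΩb : Bornology.IsBounded Ω) (p : ℝ≥0∞) (hp1 : 1 ≤ p) (hp2 : p ≠ ⊤)
    (u v : (Fin d → ℝ) → ℝ) (hum : Measurable u) (hvm : Measurable v)
    (hu : MemLp u p (volume.restrict Ω)) (hv : MemLp v p (volume.restrict Ω)) :
    eLpNorm (fun s => decRear Ω u s - decRear Ω v s) p
        (volume.restrict (Ioo 0 (volume Ω).toReal)) ≤
      eLpNorm (fun x => u x - v x) p (volume.restrict Ω) := by
  have hΩm : MeasurableSet Ω := hΩo.measurableSet
  have hfin : volume Ω ≠ ⊤ := hΩb.measure_lt_top.ne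
  have hcongr : eLpNorm (fun s => decRear Ω u s - decRear Ω v s) p
      (volume.restrict (Ioo 0 (volume Ω).toReal))
      = eLpNorm (fun s => dR Ω u s - dR Ω v s) p
        (volume.restrict (Ioo 0 (volume Ω).toReal)) := by
    refine eLpNorm_congr_ae ((ae_restrict_iff' measurableSet_Ioo).2
      (Filter.Eventually.of_forall fun s hs => ?_))
    show decRear Ω u s - decRear Ω v s = dR Ω u s - dR Ω v s
    rw [dR_eq_decRear Ω u hΩm hum hfin hs, dR_eq_decRear Ω v hΩm hvm hfin hs]
  rw [hcongr]
  have hp0 : p ≠ 0 := by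
    intro h
    rw [h] at hp1
    exact absurd hp1 (by simp)
  rw [eLpNorm_eq_lintegral_rpow_enorm_toReal hp0 hp2, eLpNorm_eq_lintegral_rpow_enorm_toReal hp0 hp2]
  have hr1 : 1 ≤ p.toReal := by
    rw [← ENNReal.toReal_one]
    exact ENNReal.toReal_mono hp2 hp1
  have hr0 : 0 ≤ 1 / p.toReal := by positivity
  refine ENNReal.rpow_le_rpow ?_ hr0
  refine main_glue hr1 (volume.restrict (Ioo 0 (volume Ω).toReal)) (volume.restrict Ω)
    ((dR_measurable Ω u).sub (dR_measurable Ω v)) (hum.sub hvm) ?_ ?_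
  · intro τ _
    exact keyK Ω u v hΩm hfin hum hvm τ
  · intro τ _
    have h := keyK Ω v u hΩm hfin hvm hum τ
    calc ∫⁻ s in Ioo 0 (volume Ω).toReal, ENNReal.ofReal (-(dR Ω u s - dR Ω v s) - τ)
        = ∫⁻ s in Ioo 0 (volume Ω).toReal, ENNReal.ofReal (dR Ω v s - dR Ω u s - τ) := by
          refine lintegral_congr fun s => ?_
          congr 1
          ring
      _ ≤ ∫⁻ x in Ω, ENNReal.ofReal (v x - u x - τ) := h
      _ = ∫⁻ x in Ω, ENNReal.ofReal (-(u x - v x) - τ) := by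
          refine lintegral_congr fun x => ?_
          congr 1
          ring
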